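/- Assume the β-strong P-order assumption holds for some β ≥ 0. Then every Greedy-Local matching M' satisfies w(M) ≤ (1+β)·w(M') for every matching M of the instance; in other words, the Greedy-Local algorithm has approximation ratio at most 1+β. -/
import Mathlib


/-- A matching of a bipartite instance with edge set `E ⊆ P × C`
(`P` identified with `Fin s`, `C` with `Fin q`): a subset of `E` in which
no two distinct edges share their `P`-endpoint or their `C`-endpoint. -/
def IsBipMatching {s q : ℕ} (E M : Finset (Fin s × Fin q)) : Prop :=
  M ⊆ E ∧ ∀ e₁ ∈ M, ∀ e₂ ∈ M, e₁ ≠ e₂ → e₁.1 ≠ e₂.1 ∧ e₁.2 ≠ e₂.2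

/-- The β-strong P-order assumption. -/
def StrongPOrder {s q : ℕ} (E : Finset (Fin s × Fin q)) (w : Fin s × Fin q → ℝ)
    (β : ℝ) : Prop :=
  ∀ i j : Fin s, i < j → ∀ c : Fin q, (i, c) ∈ E → (j, c) ∈ E → w (j, c) ≤ β * w (i, c)

/-- A Greedy-Local matching: a matching `M'` such that every edge `(p_j, c) ∈ E \ M'`
is either blocked (some `(p_i, c) ∈ M'` with `i < j`) or dominated
(some `(p_j, c') ∈ M'` with `w (p_j, c') ≥ w (p_j, c)`). -/
def GreedyLocal {s q : ℕ} (E : Finset (Fin s × Fin q)) (w : Fin s × Fin q → ℝ)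
    (M' : Finset (Fin s × Fin q)) : Prop :=
  IsBipMatching E M' ∧ ∀ e ∈ E, e ∉ M' →
    (∃ i : Fin s, i < e.1 ∧ (i, e.2) ∈ M') ∨
    (∃ c' : Fin q, (e.1, c') ∈ M' ∧ w e ≤ w (e.1, c'))

/-- Under the β-strong P-order assumption, the Greedy-Local algorithm is (1+β)-approximate. -/
theorem stmt1 {s q : ℕ} (E : Finset (Fin s × Fin q)) (w : Fin s × Fin q → ℝ)
    (hw : ∀ e ∈ E, 0 < w e) (β : ℝ) (hβ : 0 ≤ β) (hord : StrongPOrder E w β)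
    (M' : Finset (Fin s × Fin q)) (hM' : GreedyLocal E w M')
    (M : Finset (Fin s × Fin q)) (hM : IsBipMatching E M) :
    ∑ e ∈ M, w e ≤ (1 + β) * ∑ e ∈ M', w e := by
  classical
  set pB : Fin s × Fin q → Prop := fun e => ∃ c', (e.1, c') ∈ M' ∧ w e ≤ w (e.1, c') with hpB
  set MB := M.filter pB with hMBdef
  set MA := M.filter (fun e => ¬ pB e) with hMAdef
  have hsplit : ∑ e ∈ MA, w e + ∑ e ∈ MB, w e = ∑ e ∈ M, w e := by
    rw [hMAdef, hMBdef, add_comm]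
    exact Finset.sum_filter_add_sum_filter_not M pB w
  -- key existence for MA
  have hA : ∀ e ∈ MA, ∃ i, i < e.1 ∧ (i, e.2) ∈ M' ∧ w e ≤ β * w (i, e.2) := by
    intro e he
    rw [hMAdef, Finset.mem_filter] at he
    obtain ⟨heM, hnB⟩ := he
    have heE : e ∈ E := hM.1 heM
    have heM' : e ∉ M' := by
      intro h
      exact hnB ⟨e.2, by simpa using h, le_refl _⟩
    rcases hM'.2 e heE heM' with ⟨i, hi, him⟩ | hdom
    · refine ⟨i, hi, him, ?_⟩
      have := hord i e.1 hi e.2 (hM'.1.1 him) (by simpa using heE)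
      simpa using this
    · exact absurd hdom hnB
  -- sum over MA ≤ β * sum over M'
  set gA : Fin s × Fin q → Fin s × Fin q := fun e =>
    if h : ∃ i, i < e.1 ∧ (i, e.2) ∈ M' ∧ w e ≤ β * w (i, e.2) then (h.choose, e.2) else e
    with hgA
  have hgAspec : ∀ e ∈ MA, gA e ∈ M' ∧ w e ≤ β * w (gA e) ∧ (gA e).2 = e.2 := by
    intro e he
    have h := hA e he
    rw [hgA]
    simp only [dif_pos h]
    exact ⟨h.choose_spec.2.1, h.choose_spec.2.2, trivial⟩
  have hAinj : Set.InjOn gA MA := by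
    intro e₁ h₁ e₂ h₂ heq
    by_contra hne
    have hm₁ : e₁ ∈ M := Finset.mem_of_mem_filter _ h₁
    have hm₂ : e₂ ∈ M := Finset.mem_of_mem_filter _ h₂
    have := (hM.2 e₁ hm₁ e₂ hm₂ hne).2
    have h2 : (gA e₁).2 = (gA e₂).2 := by rw [heq]
    rw [(hgAspec e₁ h₁).2.2, (hgAspec e₂ h₂).2.2] at h2
    exact this h2
  have hAsum : ∑ e ∈ MA, w e ≤ β * ∑ e ∈ M', w e := by
    calc ∑ e ∈ MA, w e ≤ ∑ e ∈ MA, β * w (gA e) :=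
          Finset.sum_le_sum fun e he => (hgAspec e he).2.1
      _ = β * ∑ e ∈ MA, w (gA e) := by rw [Finset.mul_sum]
      _ = β * ∑ e ∈ MA.image gA, w e := by
          rw [Finset.sum_image (fun a ha b hb => hAinj ha hb)]
      _ ≤ β * ∑ e ∈ M', w e := by
          apply mul_le_mul_of_nonneg_left _ hβ
          apply Finset.sum_le_sum_of_subset_of_nonneg
          · intro e he
            obtain ⟨a, ha, rfl⟩ := Finset.mem_image.mp he
            exact (hgAspec a ha).1
          · intro e he _
            exact le_of_lt (hw e (hM'.1.1 he))
  -- sum over MB ≤ sum over M'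
  set gB : Fin s × Fin q → Fin s × Fin q := fun e =>
    if h : pB e then (e.1, h.choose) else e with hgB
  have hgBspec : ∀ e ∈ MB, gB e ∈ M' ∧ w e ≤ w (gB e) ∧ (gB e).1 = e.1 := by
    intro e he
    have h : pB e := (Finset.mem_filter.mp he).2
    rw [hgB]
    simp only [dif_pos h]
    exact ⟨h.choose_spec.1, h.choose_spec.2, trivial⟩
  have hBinj : Set.InjOn gB MB := by
    intro e₁ h₁ e₂ h₂ heq
    by_contra hne
    have hm₁ : e₁ ∈ M := Finset.mem_of_mem_filter _ h₁
    have hm₂ : e₂ ∈ M := Finset.mem_of_mem_filter _ h₂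
    have := (hM.2 e₁ hm₁ e₂ hm₂ hne).1
    have h1 : (gB e₁).1 = (gB e₂).1 := by rw [heq]
    rw [(hgBspec e₁ h₁).2.2, (hgBspec e₂ h₂).2.2] at h1
    exact this h1
  have hBsum : ∑ e ∈ MB, w e ≤ ∑ e ∈ M', w e := by
    calc ∑ e ∈ MB, w e ≤ ∑ e ∈ MB, w (gB e) :=
          Finset.sum_le_sum fun e he => (hgBspec e he).2.1
      _ = ∑ e ∈ MB.image gB, w e := by
          rw [Finset.sum_image (fun a ha b hb => hBinj ha hb)]
      _ ≤ ∑ e ∈ M', w e := by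
          apply Finset.sum_le_sum_of_subset_of_nonneg
          · intro e he
            obtain ⟨a, ha, rfl⟩ := Finset.mem_image.mp he
            exact (hgBspec a ha).1
          · intro e he _
            exact le_of_lt (hw e (hM'.1.1 he))
  calc ∑ e ∈ M, w e = ∑ e ∈ MA, w e + ∑ e ∈ MB, w e := hsplit.symm
    _ ≤ β * ∑ e ∈ M', w e + ∑ e ∈ M', w e := add_le_add hAsum hBsum
    _ = (1 + β) * ∑ e ∈ M', w e := by ring
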